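/- Let X be uniform Bernoulli(1/2), Y its erasure with erasure probability p, and W a {0,1}-valued random variable with conditional distribution: P(W=0|X=0,Y=0)=1−β, P(W=0|X=1,Y=1)=β, P(W=0|X=0,Y=E)=1−α, P(W=0|X=1,Y=E)=α, where α,β ∈ [0,1/2]. Then I(X,Y;W) = 1 − (1−p)h(β) − p·h(α), H(Y|W) = h(p) + (1−p)h(β), and P(X ≠ W) = (1−p)β + pα. -/
import Mathlib


open Finset Real
open scoped Classical

noncomputable section

/-- Probability of an event under a finite probability mass function. -/
def pr {Ω : Type} [Fintype Ω] (P : Ω → ℝ) (A : Ω → Prop) : ℝ :=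
  ∑ ω, if A ω then P ω else 0

/-- `P` is a probability mass function on the finite type `Ω`. -/
def IsPMF {Ω : Type} [Fintype Ω] (P : Ω → ℝ) : Prop :=
  (∀ ω, 0 ≤ P ω) ∧ ∑ ω, P ω = 1

/-- `-t log₂ t` (with the convention `0 log 0 = 0`). -/
def nlog (t : ℝ) : ℝ := - (t * Real.logb 2 t)

/-- Shannon entropy (base 2) of a random variable `X` on `(Ω, P)`. -/
def ent {Ω α : Type} [Fintype Ω] [Fintype α] (P : Ω → ℝ) (X : Ω → α) : ℝ :=
  ∑ x, nlog (pr P (fun ω => X ω = x))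

/-- Conditional Shannon entropy `H(X|Y) = H(X,Y) - H(Y)`. -/
def condEnt {Ω α β : Type} [Fintype Ω] [Fintype α] [Fintype β]
    (P : Ω → ℝ) (X : Ω → α) (Y : Ω → β) : ℝ :=
  ent P (fun ω => (X ω, Y ω)) - ent P Y

/-- Mutual information `I(X;Y) = H(X) - H(X|Y)`. -/
def mi {Ω α β : Type} [Fintype Ω] [Fintype α] [Fintype β]
    (P : Ω → ℝ) (X : Ω → α) (Y : Ω → β) : ℝ :=
  ent P X - condEnt P X Y

/-- Conditional mutual information `I(X;Y|Z) = H(X|Z) - H(X|Y,Z)`. -/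
def condMI {Ω α β γ : Type} [Fintype Ω] [Fintype α] [Fintype β] [Fintype γ]
    (P : Ω → ℝ) (X : Ω → α) (Y : Ω → β) (Z : Ω → γ) : ℝ :=
  condEnt P X Z - condEnt P X (fun ω => (Y ω, Z ω))

/-- Binary entropy function. -/
def binEnt (a : ℝ) : ℝ := nlog a + nlog (1 - a)

lemma pr_congr {Ω : Type} [Fintype Ω] (P : Ω → ℝ) {A B : Ω → Prop}
    (h : ∀ ω, A ω ↔ B ω) : pr P A = pr P B := by
  unfold pr; exact Finset.sum_congr rfl fun ω _ => by simp only [h ω]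

lemma pr_split {Ω : Type} [Fintype Ω] (P : Ω → ℝ) (A B : Ω → Prop) :
    pr P A = pr P (fun ω => A ω ∧ B ω) + pr P (fun ω => A ω ∧ ¬ B ω) := by
  unfold pr; rw [← Finset.sum_add_distrib]
  refine Finset.sum_congr rfl fun ω _ => ?_
  by_cases hA : A ω <;> by_cases hB : B ω <;> simp [hA, hB]

lemma pr_eq_zero {Ω : Type} [Fintype Ω] (P : Ω → ℝ) {A : Ω → Prop}
    (h : ∀ ω, ¬ A ω) : pr P A = 0 :=
  Finset.sum_eq_zero fun ω _ => by simp [h ω]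

lemma nlog_zero : nlog 0 = 0 := by simp [nlog]

lemma nlog_mul {a b : ℝ} (ha : 0 ≤ a) (hb : 0 ≤ b) :
    nlog (a * b) = a * nlog b + b * nlog a := by
  rcases ha.eq_or_lt with h|h
  · simp [← h, nlog]
  rcases hb.eq_or_lt with h'|h'
  · simp [← h', nlog]
  unfold nlog
  rw [Real.logb_mul h.ne' h'.ne']; ring

lemma nlog_half : nlog (1/2 : ℝ) = 1/2 := by
  have : Real.logb 2 (1/2 : ℝ) = -1 := by
    rw [one_div, Real.logb_inv, Real.logb_self_eq_one] <;> norm_num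
  simp [nlog, this]

lemma nlog_div_two {x : ℝ} (hx : 0 ≤ x) : nlog (x/2) = x/2 + nlog x / 2 := by
  have h : x/2 = x * (1/2) := by ring
  rw [h, nlog_mul hx (by norm_num), nlog_half]; ring


set_option maxHeartbeats 2000000

/-- Parametric family for regime G₄ (informed encoder): with the conditional
distribution `P(W=0|X=0,Y=0)=1-β`, `P(W=0|X=1,Y=1)=β`, `P(W=0|X=0,Y=E)=1-α`,
`P(W=0|X=1,Y=E)=α`, we get `I(X,Y;W) = 1 - (1-p)h(β) - p h(α)`,
`H(Y|W) = h(p) + (1-p)h(β)`, and `P(X ≠ W) = (1-p)β + pα`. -/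
theorem stmt13 {Ω : Type} [Fintype Ω] (P : Ω → ℝ) (hP : IsPMF P)
    (X W : Ω → Bool) (Y : Ω → Option Bool)
    (p α β : ℝ) (hp : 0 < p) (hp1 : p < 1)
    (hα0 : 0 ≤ α) (hαh : α ≤ 1/2) (hβ0 : 0 ≤ β) (hβh : β ≤ 1/2)
    (hX : ∀ b, pr P (fun ω => X ω = b) = 1/2)
    (hstruct : ∀ ω, Y ω = some (X ω) ∨ Y ω = none)
    (hindE : ∀ b, pr P (fun ω => Y ω = none ∧ X ω = b) = p * pr P (fun ω => X ω = b))
    (hc00 : pr P (fun ω => W ω = false ∧ X ω = false ∧ Y ω = some false)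
      = (1 - β) * pr P (fun ω => X ω = false ∧ Y ω = some false))
    (hc11 : pr P (fun ω => W ω = false ∧ X ω = true ∧ Y ω = some true)
      = β * pr P (fun ω => X ω = true ∧ Y ω = some true))
    (hc0E : pr P (fun ω => W ω = false ∧ X ω = false ∧ Y ω = none)
      = (1 - α) * pr P (fun ω => X ω = false ∧ Y ω = none))
    (hc1E : pr P (fun ω => W ω = false ∧ X ω = true ∧ Y ω = none)
      = α * pr P (fun ω => X ω = true ∧ Y ω = none)) :
    mi P (fun ω => (X ω, Y ω)) W = 1 - (1 - p) * binEnt β - p * binEnt α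
    ∧ condEnt P Y W = binEnt p + (1 - p) * binEnt β
    ∧ pr P (fun ω => X ω ≠ W ω) = (1 - p) * β + p * α := by
  have prc : ∀ {A B : Ω → Prop}, (∀ ω, A ω ↔ B ω) → pr P A = pr P B :=
    fun h => pr_congr P h
  -- atoms of (X, Y)
  have hafn : pr P (fun ω => X ω = false ∧ Y ω = none) = p/2 := by
    have h1 := hindE false; rw [hX] at h1
    rw [prc fun ω => and_comm, h1]; ring
  have hatn : pr P (fun ω => X ω = true ∧ Y ω = none) = p/2 := by
    have h1 := hindE true; rw [hX] at h1
    rw [prc fun ω => and_comm, h1]; ring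
  have hafsf : pr P (fun ω => X ω = false ∧ Y ω = some false) = (1-p)/2 := by
    have hs := pr_split P (fun ω => X ω = false) (fun ω => Y ω = some false)
    have h2 : pr P (fun ω => X ω = false ∧ ¬ Y ω = some false)
        = pr P (fun ω => X ω = false ∧ Y ω = none) :=
      prc fun ω => by rcases hstruct ω with h|h <;> cases hx : X ω <;> simp [h, hx]
    rw [hX false, h2, hafn] at hs
    linarith
  have hatst : pr P (fun ω => X ω = true ∧ Y ω = some true) = (1-p)/2 := by
    have hs := pr_split P (fun ω => X ω = true) (fun ω => Y ω = some true)
    have h2 : pr P (fun ω => X ω = true ∧ ¬ Y ω = some true)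
        = pr P (fun ω => X ω = true ∧ Y ω = none) :=
      prc fun ω => by rcases hstruct ω with h|h <;> cases hx : X ω <;> simp [h, hx]
    rw [hX true, h2, hatn] at hs
    linarith
  have hafst : pr P (fun ω => X ω = false ∧ Y ω = some true) = 0 :=
    pr_eq_zero P fun ω ⟨hx, hy⟩ => by rcases hstruct ω with h|h <;> simp_all
  have hatsf : pr P (fun ω => X ω = true ∧ Y ω = some false) = 0 :=
    pr_eq_zero P fun ω ⟨hx, hy⟩ => by rcases hstruct ω with h|h <;> simp_all
    -- joint triples ((X,Y),W)
  have t_f_sf_f : pr P (fun ω => (X ω = false ∧ Y ω = some false) ∧ W ω = false)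
      = (1 - β) * ((1-p)/2) := by
    have h2 : pr P (fun ω => (X ω = false ∧ Y ω = some false) ∧ W ω = false)
        = pr P (fun ω => W ω = false ∧ X ω = false ∧ Y ω = some false) := prc fun ω => by tauto
    rw [h2, hc00, hafsf]
  have t_f_sf_t : pr P (fun ω => (X ω = false ∧ Y ω = some false) ∧ W ω = true)
      = β * ((1-p)/2) := by
    have hs := pr_split P (fun ω => X ω = false ∧ Y ω = some false) (fun ω => W ω = false)
    have h2 : pr P (fun ω => (X ω = false ∧ Y ω = some false) ∧ ¬ W ω = false)
        = pr P (fun ω => (X ω = false ∧ Y ω = some false) ∧ W ω = true) :=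
      prc fun ω => by cases hw : W ω <;> simp [hw]
    rw [hafsf, t_f_sf_f, h2] at hs
    linear_combination -hs
  have t_t_st_f : pr P (fun ω => (X ω = true ∧ Y ω = some true) ∧ W ω = false)
      = β * ((1-p)/2) := by
    have h2 : pr P (fun ω => (X ω = true ∧ Y ω = some true) ∧ W ω = false)
        = pr P (fun ω => W ω = false ∧ X ω = true ∧ Y ω = some true) := prc fun ω => by tauto
    rw [h2, hc11, hatst]
  have t_t_st_t : pr P (fun ω => (X ω = true ∧ Y ω = some true) ∧ W ω = true)
      = (1 - β) * ((1-p)/2) := by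
    have hs := pr_split P (fun ω => X ω = true ∧ Y ω = some true) (fun ω => W ω = false)
    have h2 : pr P (fun ω => (X ω = true ∧ Y ω = some true) ∧ ¬ W ω = false)
        = pr P (fun ω => (X ω = true ∧ Y ω = some true) ∧ W ω = true) :=
      prc fun ω => by cases hw : W ω <;> simp [hw]
    rw [hatst, t_t_st_f, h2] at hs
    linear_combination -hs
  have t_f_n_f : pr P (fun ω => (X ω = false ∧ Y ω = none) ∧ W ω = false)
      = (1 - α) * (p/2) := by
    have h2 : pr P (fun ω => (X ω = false ∧ Y ω = none) ∧ W ω = false)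
        = pr P (fun ω => W ω = false ∧ X ω = false ∧ Y ω = none) := prc fun ω => by tauto
    rw [h2, hc0E, hafn]
  have t_f_n_t : pr P (fun ω => (X ω = false ∧ Y ω = none) ∧ W ω = true)
      = α * (p/2) := by
    have hs := pr_split P (fun ω => X ω = false ∧ Y ω = none) (fun ω => W ω = false)
    have h2 : pr P (fun ω => (X ω = false ∧ Y ω = none) ∧ ¬ W ω = false)
        = pr P (fun ω => (X ω = false ∧ Y ω = none) ∧ W ω = true) :=
      prc fun ω => by cases hw : W ω <;> simp [hw]
    rw [hafn, t_f_n_f, h2] at hs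
    linear_combination -hs
  have t_t_n_f : pr P (fun ω => (X ω = true ∧ Y ω = none) ∧ W ω = false)
      = α * (p/2) := by
    have h2 : pr P (fun ω => (X ω = true ∧ Y ω = none) ∧ W ω = false)
        = pr P (fun ω => W ω = false ∧ X ω = true ∧ Y ω = none) := prc fun ω => by tauto
    rw [h2, hc1E, hatn]
  have t_t_n_t : pr P (fun ω => (X ω = true ∧ Y ω = none) ∧ W ω = true)
      = (1 - α) * (p/2) := by
    have hs := pr_split P (fun ω => X ω = true ∧ Y ω = none) (fun ω => W ω = false)
    have h2 : pr P (fun ω => (X ω = true ∧ Y ω = none) ∧ ¬ W ω = false)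
        = pr P (fun ω => (X ω = true ∧ Y ω = none) ∧ W ω = true) :=
      prc fun ω => by cases hw : W ω <;> simp [hw]
    rw [hatn, t_t_n_f, h2] at hs
    linear_combination -hs
  have z_f_st_f : pr P (fun ω => (X ω = false ∧ Y ω = some true) ∧ W ω = false) = 0 :=
    pr_eq_zero P fun ω ⟨⟨hx, hy⟩, _⟩ => by rcases hstruct ω with h|h <;> simp_all
  have z_f_st_t : pr P (fun ω => (X ω = false ∧ Y ω = some true) ∧ W ω = true) = 0 :=
    pr_eq_zero P fun ω ⟨⟨hx, hy⟩, _⟩ => by rcases hstruct ω with h|h <;> simp_all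
  have z_t_sf_f : pr P (fun ω => (X ω = true ∧ Y ω = some false) ∧ W ω = false) = 0 :=
    pr_eq_zero P fun ω ⟨⟨hx, hy⟩, _⟩ => by rcases hstruct ω with h|h <;> simp_all
  have z_t_sf_t : pr P (fun ω => (X ω = true ∧ Y ω = some false) ∧ W ω = true) = 0 :=
    pr_eq_zero P fun ω ⟨⟨hx, hy⟩, _⟩ => by rcases hstruct ω with h|h <;> simp_all
  -- marginals pr(W=w ∧ X=b)
  have m_f_f : pr P (fun ω => W ω = false ∧ X ω = false) = (1 - α) * (p/2) + (1 - β) * ((1-p)/2) := by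
    have hs := pr_split P (fun ω => W ω = false ∧ X ω = false) (fun ω => Y ω = none)
    have h1 : pr P (fun ω => (W ω = false ∧ X ω = false) ∧ Y ω = none)
        = pr P (fun ω => (X ω = false ∧ Y ω = none) ∧ W ω = false) := prc fun ω => by tauto
    have h2 : pr P (fun ω => (W ω = false ∧ X ω = false) ∧ ¬ Y ω = none)
        = pr P (fun ω => (X ω = false ∧ Y ω = some false) ∧ W ω = false) :=
      prc fun ω => by rcases hstruct ω with h|h <;> cases hx : X ω <;> simp [h, hx] <;> tauto
    rw [h1, h2, t_f_n_f, t_f_sf_f] at hs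
    exact hs
  have m_f_t : pr P (fun ω => W ω = false ∧ X ω = true) = α * (p/2) + β * ((1-p)/2) := by
    have hs := pr_split P (fun ω => W ω = false ∧ X ω = true) (fun ω => Y ω = none)
    have h1 : pr P (fun ω => (W ω = false ∧ X ω = true) ∧ Y ω = none)
        = pr P (fun ω => (X ω = true ∧ Y ω = none) ∧ W ω = false) := prc fun ω => by tauto
    have h2 : pr P (fun ω => (W ω = false ∧ X ω = true) ∧ ¬ Y ω = none)
        = pr P (fun ω => (X ω = true ∧ Y ω = some true) ∧ W ω = false) :=
      prc fun ω => by rcases hstruct ω with h|h <;> cases hx : X ω <;> simp [h, hx] <;> tauto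
    rw [h1, h2, t_t_n_f, t_t_st_f] at hs
    exact hs
  have m_t_f : pr P (fun ω => W ω = true ∧ X ω = false) = α * (p/2) + β * ((1-p)/2) := by
    have hs := pr_split P (fun ω => W ω = true ∧ X ω = false) (fun ω => Y ω = none)
    have h1 : pr P (fun ω => (W ω = true ∧ X ω = false) ∧ Y ω = none)
        = pr P (fun ω => (X ω = false ∧ Y ω = none) ∧ W ω = true) := prc fun ω => by tauto
    have h2 : pr P (fun ω => (W ω = true ∧ X ω = false) ∧ ¬ Y ω = none)
        = pr P (fun ω => (X ω = false ∧ Y ω = some false) ∧ W ω = true) :=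
      prc fun ω => by rcases hstruct ω with h|h <;> cases hx : X ω <;> simp [h, hx] <;> tauto
    rw [h1, h2, t_f_n_t, t_f_sf_t] at hs
    exact hs
  have m_t_t : pr P (fun ω => W ω = true ∧ X ω = true) = (1 - α) * (p/2) + (1 - β) * ((1-p)/2) := by
    have hs := pr_split P (fun ω => W ω = true ∧ X ω = true) (fun ω => Y ω = none)
    have h1 : pr P (fun ω => (W ω = true ∧ X ω = true) ∧ Y ω = none)
        = pr P (fun ω => (X ω = true ∧ Y ω = none) ∧ W ω = true) := prc fun ω => by tauto
    have h2 : pr P (fun ω => (W ω = true ∧ X ω = true) ∧ ¬ Y ω = none)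
        = pr P (fun ω => (X ω = true ∧ Y ω = some true) ∧ W ω = true) :=
      prc fun ω => by rcases hstruct ω with h|h <;> cases hx : X ω <;> simp [h, hx] <;> tauto
    rw [h1, h2, t_t_n_t, t_t_st_t] at hs
    exact hs
  -- W marginal
  have hwf : pr P (fun ω => W ω = false) = 1/2 := by
    have hs := pr_split P (fun ω => W ω = false) (fun ω => X ω = false)
    have h2 : pr P (fun ω => W ω = false ∧ ¬ X ω = false)
        = pr P (fun ω => W ω = false ∧ X ω = true) :=
      prc fun ω => by cases hx : X ω <;> simp [hx]
    rw [h2, m_f_f, m_f_t] at hs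
    rw [hs]; ring
  have hwt : pr P (fun ω => W ω = true) = 1/2 := by
    have hs := pr_split P (fun ω => W ω = true) (fun ω => X ω = false)
    have h2 : pr P (fun ω => W ω = true ∧ ¬ X ω = false)
        = pr P (fun ω => W ω = true ∧ X ω = true) :=
      prc fun ω => by cases hx : X ω <;> simp [hx]
    rw [h2, m_t_f, m_t_t] at hs
    rw [hs]; ring
  -- pairs (Y, W)
  have q_sf_f : pr P (fun ω => Y ω = some false ∧ W ω = false) = (1 - β) * ((1-p)/2) := by
    have hs := pr_split P (fun ω => Y ω = some false ∧ W ω = false) (fun ω => X ω = false)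
    have h1 : pr P (fun ω => (Y ω = some false ∧ W ω = false) ∧ X ω = false)
        = pr P (fun ω => (X ω = false ∧ Y ω = some false) ∧ W ω = false) := prc fun ω => by tauto
    have h2 : pr P (fun ω => (Y ω = some false ∧ W ω = false) ∧ ¬ X ω = false)
        = pr P (fun ω => (X ω = true ∧ Y ω = some false) ∧ W ω = false) :=
      prc fun ω => by cases hx : X ω <;> simp [hx] <;> tauto
    rw [h1, h2, t_f_sf_f, z_t_sf_f] at hs
    rw [hs]; ring
  have q_sf_t : pr P (fun ω => Y ω = some false ∧ W ω = true) = β * ((1-p)/2) := by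
    have hs := pr_split P (fun ω => Y ω = some false ∧ W ω = true) (fun ω => X ω = false)
    have h1 : pr P (fun ω => (Y ω = some false ∧ W ω = true) ∧ X ω = false)
        = pr P (fun ω => (X ω = false ∧ Y ω = some false) ∧ W ω = true) := prc fun ω => by tauto
    have h2 : pr P (fun ω => (Y ω = some false ∧ W ω = true) ∧ ¬ X ω = false)
        = pr P (fun ω => (X ω = true ∧ Y ω = some false) ∧ W ω = true) :=
      prc fun ω => by cases hx : X ω <;> simp [hx] <;> tauto
    rw [h1, h2, t_f_sf_t, z_t_sf_t] at hs
    rw [hs]; ring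
  have q_st_f : pr P (fun ω => Y ω = some true ∧ W ω = false) = β * ((1-p)/2) := by
    have hs := pr_split P (fun ω => Y ω = some true ∧ W ω = false) (fun ω => X ω = false)
    have h1 : pr P (fun ω => (Y ω = some true ∧ W ω = false) ∧ X ω = false)
        = pr P (fun ω => (X ω = false ∧ Y ω = some true) ∧ W ω = false) := prc fun ω => by tauto
    have h2 : pr P (fun ω => (Y ω = some true ∧ W ω = false) ∧ ¬ X ω = false)
        = pr P (fun ω => (X ω = true ∧ Y ω = some true) ∧ W ω = false) :=
      prc fun ω => by cases hx : X ω <;> simp [hx] <;> tauto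
    rw [h1, h2, z_f_st_f, t_t_st_f] at hs
    rw [hs]; ring
  have q_st_t : pr P (fun ω => Y ω = some true ∧ W ω = true) = (1 - β) * ((1-p)/2) := by
    have hs := pr_split P (fun ω => Y ω = some true ∧ W ω = true) (fun ω => X ω = false)
    have h1 : pr P (fun ω => (Y ω = some true ∧ W ω = true) ∧ X ω = false)
        = pr P (fun ω => (X ω = false ∧ Y ω = some true) ∧ W ω = true) := prc fun ω => by tauto
    have h2 : pr P (fun ω => (Y ω = some true ∧ W ω = true) ∧ ¬ X ω = false)
        = pr P (fun ω => (X ω = true ∧ Y ω = some true) ∧ W ω = true) :=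
      prc fun ω => by cases hx : X ω <;> simp [hx] <;> tauto
    rw [h1, h2, z_f_st_t, t_t_st_t] at hs
    rw [hs]; ring
  have q_n_f : pr P (fun ω => Y ω = none ∧ W ω = false) = p/2 := by
    have hs := pr_split P (fun ω => Y ω = none ∧ W ω = false) (fun ω => X ω = false)
    have h1 : pr P (fun ω => (Y ω = none ∧ W ω = false) ∧ X ω = false)
        = pr P (fun ω => (X ω = false ∧ Y ω = none) ∧ W ω = false) := prc fun ω => by tauto
    have h2 : pr P (fun ω => (Y ω = none ∧ W ω = false) ∧ ¬ X ω = false)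
        = pr P (fun ω => (X ω = true ∧ Y ω = none) ∧ W ω = false) :=
      prc fun ω => by cases hx : X ω <;> simp [hx] <;> tauto
    rw [h1, h2, t_f_n_f, t_t_n_f] at hs
    rw [hs]; ring
  have q_n_t : pr P (fun ω => Y ω = none ∧ W ω = true) = p/2 := by
    have hs := pr_split P (fun ω => Y ω = none ∧ W ω = true) (fun ω => X ω = false)
    have h1 : pr P (fun ω => (Y ω = none ∧ W ω = true) ∧ X ω = false)
        = pr P (fun ω => (X ω = false ∧ Y ω = none) ∧ W ω = true) := prc fun ω => by tauto
    have h2 : pr P (fun ω => (Y ω = none ∧ W ω = true) ∧ ¬ X ω = false)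
        = pr P (fun ω => (X ω = true ∧ Y ω = none) ∧ W ω = true) :=
      prc fun ω => by cases hx : X ω <;> simp [hx] <;> tauto
    rw [h1, h2, t_f_n_t, t_t_n_t] at hs
    rw [hs]; ring
  -- entropies
  have hentW : ent P W = 1 := by
    simp only [ent, Fintype.sum_bool]
    rw [hwt, hwf, nlog_half]
    norm_num
  have hentXY : ent P (fun ω => (X ω, Y ω)) = 2 * nlog ((1-p)/2) + 2 * nlog (p/2) := by
    simp only [ent, Fintype.sum_prod_type, Fintype.sum_bool, Fintype.sum_option, Prod.mk.injEq]
    rw [hafsf, hatst, hafn, hatn, hafst, hatsf, nlog_zero]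
    ring
  have hentXYW : ent P (fun ω => ((X ω, Y ω), W ω))
      = 2 * nlog ((1 - β) * ((1-p)/2)) + 2 * nlog (β * ((1-p)/2))
        + 2 * nlog ((1 - α) * (p/2)) + 2 * nlog (α * (p/2)) := by
    simp only [ent, Fintype.sum_prod_type, Fintype.sum_bool, Fintype.sum_option, Prod.mk.injEq]
    rw [t_f_sf_f, t_f_sf_t, t_t_st_f, t_t_st_t, t_f_n_f, t_f_n_t, t_t_n_f, t_t_n_t,
      z_f_st_f, z_f_st_t, z_t_sf_f, z_t_sf_t, nlog_zero]
    ring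
  have hentYW : ent P (fun ω => (Y ω, W ω))
      = 2 * nlog ((1 - β) * ((1-p)/2)) + 2 * nlog (β * ((1-p)/2)) + 2 * nlog (p/2) := by
    simp only [ent, Fintype.sum_prod_type, Fintype.sum_bool, Fintype.sum_option, Prod.mk.injEq]
    rw [q_sf_f, q_sf_t, q_st_f, q_st_t, q_n_f, q_n_t]
    ring
  -- algebraic expansions
  have hp0 : (0:ℝ) ≤ p := hp.le
  have h1p : (0:ℝ) ≤ 1 - p := by linarith
  have hβ1 : (0:ℝ) ≤ 1 - β := by linarith
  have hα1 : (0:ℝ) ≤ 1 - α := by linarith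
  have e1 : nlog ((1 - β) * ((1-p)/2))
      = (1 - β) * nlog ((1-p)/2) + ((1-p)/2) * nlog (1 - β) :=
    nlog_mul hβ1 (by linarith)
  have e2 : nlog (β * ((1-p)/2)) = β * nlog ((1-p)/2) + ((1-p)/2) * nlog β :=
    nlog_mul hβ0 (by linarith)
  have e3 : nlog ((1 - α) * (p/2)) = (1 - α) * nlog (p/2) + (p/2) * nlog (1 - α) :=
    nlog_mul hα1 (by linarith)
  have e4 : nlog (α * (p/2)) = α * nlog (p/2) + (p/2) * nlog α :=
    nlog_mul hα0 (by linarith)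
  have e5 : nlog ((1-p)/2) = (1-p)/2 + nlog (1-p) / 2 := nlog_div_two h1p
  have e6 : nlog (p/2) = p/2 + nlog p / 2 := nlog_div_two hp0
  refine ⟨?_, ?_, ?_⟩
  · simp only [mi, condEnt]
    rw [hentXY, hentXYW, hentW]
    simp only [binEnt]
    rw [e1, e2, e3, e4, e5, e6]
    ring
  · simp only [condEnt]
    rw [hentYW, hentW]
    simp only [binEnt]
    rw [e1, e2, e5, e6]
    ring
  · have hs := pr_split P (fun ω => X ω ≠ W ω) (fun ω => X ω = false)
    have h1 : pr P (fun ω => X ω ≠ W ω ∧ X ω = false)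
        = pr P (fun ω => W ω = true ∧ X ω = false) :=
      prc fun ω => by cases hx : X ω <;> cases hw : W ω <;> simp [hx, hw]
    have h2 : pr P (fun ω => X ω ≠ W ω ∧ ¬ X ω = false)
        = pr P (fun ω => W ω = false ∧ X ω = true) :=
      prc fun ω => by cases hx : X ω <;> cases hw : W ω <;> simp [hx, hw]
    rw [h1, h2, m_t_f, m_f_t] at hs
    rw [hs]; ring
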